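/- Fix b > 0 and let S(b) = {z ∈ ℂ : Re(z) > 0, |Im(z)| ≤ Re(z), |z| ≤ b}. Then the map ρ₁(h₁,h₂) = h₂/(1+h₁h₂) is Lipschitz on S(b)×S(b) with respect to the ℓ¹ norm, with Lipschitz constant K₀ = max{1, b²}: for all (h₁,h₂), (g₁,g₂) ∈ S(b)², |ρ₁(h₁,h₂) - ρ₁(g₁,g₂)| ≤ K₀(|h₁-g₁| + |h₂-g₂|). -/

import Mathlib

open Complex

lemma one_le_abs_one_add (z w : ℂ) (hz : 0 < z.re ∧ |z.im| ≤ z.re)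
    (hw : 0 < w.re ∧ |w.im| ≤ w.re) : 1 ≤ ‖1 + z * w‖ := by
  have hre : 0 ≤ (z * w).re := by
    have h1 : z.im * w.im ≤ |z.im| * |w.im| := by
      calc z.im * w.im ≤ |z.im * w.im| := le_abs_self _
        _ = |z.im| * |w.im| := abs_mul _ _
    have h2 : |z.im| * |w.im| ≤ z.re * w.re :=
      mul_le_mul hz.2 hw.2 (abs_nonneg _) hz.1.le
    simp only [Complex.mul_re]
    linarith
  have h1 : 1 ≤ (1 + z * w).re := by
    simp only [Complex.add_re, Complex.one_re]; linarith
  exact h1.trans (Complex.re_le_norm _)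

theorem stmt_11 (b : ℝ) (hb : 0 < b)
    (S : Set ℂ) (hS : S = {z : ℂ | 0 < z.re ∧ |z.im| ≤ z.re ∧ ‖z‖ ≤ b})
    (h₁ h₂ g₁ g₂ : ℂ) (hh₁ : h₁ ∈ S) (hh₂ : h₂ ∈ S) (hg₁ : g₁ ∈ S) (hg₂ : g₂ ∈ S) :
    ‖h₂ / (1 + h₁ * h₂) - g₂ / (1 + g₁ * g₂)‖
      ≤ max 1 (b ^ 2) * (‖h₁ - g₁‖ + ‖h₂ - g₂‖) := by
  subst hS
  obtain ⟨a1, a2, a3⟩ := hh₁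
  obtain ⟨b1, b2, b3⟩ := hh₂
  obtain ⟨c1, c2, c3⟩ := hg₁
  obtain ⟨d1, d2, d3⟩ := hg₂
  have hA : 1 ≤ ‖1 + h₁ * h₂‖ := one_le_abs_one_add _ _ ⟨a1, a2⟩ ⟨b1, b2⟩
  have hB : 1 ≤ ‖1 + g₁ * g₂‖ := one_le_abs_one_add _ _ ⟨c1, c2⟩ ⟨d1, d2⟩
  have hA0 : (1 + h₁ * h₂) ≠ 0 := by
    intro h; rw [h] at hA; simp at hA; linarith
  have hB0 : (1 + g₁ * g₂) ≠ 0 := by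
    intro h; rw [h] at hB; simp at hB; linarith
  have key : h₂ / (1 + h₁ * h₂) - g₂ / (1 + g₁ * g₂)
      = ((h₂ - g₂) + h₂ * g₂ * (g₁ - h₁)) / ((1 + h₁ * h₂) * (1 + g₁ * g₂)) := by
    rw [div_sub_div _ _ hA0 hB0]
    ring
  rw [key, norm_div]
  have hden : 1 ≤ ‖(1 + h₁ * h₂) * (1 + g₁ * g₂)‖ := by
    rw [norm_mul]; nlinarith
  have hnum : ‖(h₂ - g₂) + h₂ * g₂ * (g₁ - h₁)‖
      ≤ ‖h₂ - g₂‖ + b ^ 2 * ‖h₁ - g₁‖ := by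
    calc ‖(h₂ - g₂) + h₂ * g₂ * (g₁ - h₁)‖
        ≤ ‖h₂ - g₂‖ + ‖h₂ * g₂ * (g₁ - h₁)‖ := norm_add_le _ _
      _ ≤ ‖h₂ - g₂‖ + b ^ 2 * ‖h₁ - g₁‖ := by
          rw [norm_mul, norm_mul]
          have : ‖g₁ - h₁‖ = ‖h₁ - g₁‖ := by
            rw [← norm_neg]; ring_nf
          rw [this]
          have hnn : 0 ≤ ‖h₁ - g₁‖ := norm_nonneg _
          have hb2 : ‖h₂‖ * ‖g₂‖ ≤ b ^ 2 := by
            nlinarith [norm_nonneg h₂, norm_nonneg g₂]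
          nlinarith
  have hK : (1 : ℝ) ≤ max 1 (b ^ 2) := le_max_left _ _
  have hK2 : b ^ 2 ≤ max 1 (b ^ 2) := le_max_right _ _
  have h1 : ‖(h₂ - g₂) + h₂ * g₂ * (g₁ - h₁)‖
      / ‖(1 + h₁ * h₂) * (1 + g₁ * g₂)‖
      ≤ ‖(h₂ - g₂) + h₂ * g₂ * (g₁ - h₁)‖ := by
    apply div_le_self (norm_nonneg _) hden
  refine h1.trans (hnum.trans ?_)
  nlinarith [norm_nonneg (h₁ - g₁), norm_nonneg (h₂ - g₂)]
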